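/- (Bounds on the number of main edges.) For every perfect matching M of the constructed graph G, the number k = |Main(M)| of main edges of M satisfies max(Σ_i α_i, Σ_j β_j) ≤ k ≤ min(Σ_i α'_i, Σ_j β'_j). -/

import Mathlib

open Finset

section Construction

variable {s t : ℕ}

/-- The left part `S` of the constructed complete bipartite graph `G`:
`A_i` (`α i` copies of `a_i`), `A'_i` (`α' i − α i` copies of `a_i`),
the dummy sets `X_j` (`β' j − β j` vertices) and `W_j` (`s − β' j` vertices). -/
abbrev LeftV (s t : ℕ) (α α' : Fin s → ℕ) (β β' : Fin t → ℕ) : Type :=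
  ((Σ i : Fin s, Fin (α i)) ⊕ (Σ i : Fin s, Fin (α' i - α i))) ⊕
  ((Σ j : Fin t, Fin (β' j - β j)) ⊕ (Σ j : Fin t, Fin (s - β' j)))

/-- The right part `T` of the constructed graph: the sets `Bset_i` (vertex `(i, j)`
is the copy `b_{ji}` of `b_j` lying in `Bset_i`; thus `B_j = {(i, j) : i}`) together
with the compensator set `Y` of `Σ_i α'_i − Σ_j β_j` dummy vertices. -/
abbrev RightV (s t : ℕ) (α' : Fin s → ℕ) (β : Fin t → ℕ) : Type :=
  (Fin s × Fin t) ⊕ Fin (∑ i, α' i - ∑ j, β j)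

variable {α α' : Fin s → ℕ} {β β' : Fin t → ℕ}

/-- Adjacency in the constructed graph `G`: each vertex of `A_i ∪ A'_i` is joined to every
vertex of `Bset_i`; each vertex of `A'_i` is joined to every vertex of `Y`; each vertex of
`X_j` is joined to every vertex of `B_j` and to every vertex of `Y`; each vertex of `W_j`
is joined to every vertex of `B_j`. -/
def Adj : LeftV s t α α' β β' → RightV s t α' β → Prop
  | .inl (.inl ⟨i, _⟩), .inl (i', _) => i' = i       -- A_i — Bset_i
  | .inl (.inl _), .inr _ => False
  | .inl (.inr ⟨i, _⟩), .inl (i', _) => i' = i       -- A'_i — Bset_i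
  | .inl (.inr _), .inr _ => True                     -- A'_i — Y
  | .inr (.inl ⟨j, _⟩), .inl (_, j') => j' = j       -- X_j — B_j
  | .inr (.inl _), .inr _ => True                     -- X_j — Y
  | .inr (.inr ⟨j, _⟩), .inl (_, j') => j' = j       -- W_j — B_j
  | .inr (.inr _), .inr _ => False

/-- Edge weights of the constructed graph `G`. -/
def wt (δ : Fin s → Fin t → ℝ) (γ' γ'' : ℝ) : LeftV s t α α' β β' → RightV s t α' β → ℝ
  | .inl _, .inl (i, j) => δ i j     -- main edges into b_{ji}
  | .inl (.inl _), .inr _ => 0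
  | .inl (.inr _), .inr _ => γ'      -- A'_i — Y
  | .inr (.inl _), .inl _ => γ'      -- X_j — B_j
  | .inr (.inl _), .inr _ => γ''     -- X_j — Y
  | .inr (.inr _), _ => 0            -- W_j — B_j

/-- An edge is a main edge when it joins `⋃_i (A_i ∪ A'_i)` to `⋃_i Bset_i`. -/
def IsMainEdge : LeftV s t α α' β β' → RightV s t α' β → Bool
  | .inl _, .inl _ => true
  | _, _ => false

/-- A perfect matching of `G` is a bijection between the two parts all of whose
pairs are edges of `G`. -/
def IsPM (M : LeftV s t α α' β β' ≃ RightV s t α' β) : Prop :=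
  ∀ v, Adj v (M v)

/-- `Weight(M)`, the total weight of a perfect matching. -/
noncomputable def totalWeight (δ : Fin s → Fin t → ℝ) (γ' γ'' : ℝ)
    (M : LeftV s t α α' β β' ≃ RightV s t α' β) : ℝ :=
  ∑ v, wt δ γ' γ'' v (M v)

/-- `Weight(Main(M))`, the total weight of the main edges of `M`. -/
noncomputable def mainWeight (δ : Fin s → Fin t → ℝ) (γ' γ'' : ℝ)
    (M : LeftV s t α α' β β' ≃ RightV s t α' β) : ℝ :=
  ∑ v ∈ univ.filter (fun v => IsMainEdge v (M v)), wt δ γ' γ'' v (M v)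

/-- `|Main(M)|`, the number of main edges of `M`. -/
def mainCount (M : LeftV s t α α' β β' ≃ RightV s t α' β) : ℕ :=
  (univ.filter (fun v => IsMainEdge v (M v))).card

/-- `L ⊆ A × B` is an MMDC between `A` and `B`: each `a_i` lies in at least `α i` and at
most `α' i` pairs, and each `b_j` lies in at least `β j` and at most `β' j` pairs. -/
def IsMMDC (α α' : Fin s → ℕ) (β β' : Fin t → ℕ) (L : Finset (Fin s × Fin t)) : Prop :=
  (∀ i, α i ≤ (L.filter (fun p => p.1 = i)).card ∧
    (L.filter (fun p => p.1 = i)).card ≤ α' i) ∧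
  (∀ j, β j ≤ (L.filter (fun p => p.2 = j)).card ∧
    (L.filter (fun p => p.2 = j)).card ≤ β' j)

/-- `c(L)`, the cost of a matching `L` between `A` and `B`. -/
noncomputable def cost (δ : Fin s → Fin t → ℝ) (L : Finset (Fin s × Fin t)) : ℝ :=
  ∑ p ∈ L, δ p.1 p.2

end Construction

/-- **bounds on the number of main edges.** For every perfect matching `M`
of the constructed graph `G`, the number `k = |Main(M)|` of main edges satisfies
`max(Σ_i α_i, Σ_j β_j) ≤ k ≤ min(Σ_i α'_i, Σ_j β'_j)`. -/
theorem mainCount_bounds {s t : ℕ} (α α' : Fin s → ℕ) (β β' : Fin t → ℕ)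
    (δ : Fin s → Fin t → ℝ) (γ' γ'' : ℝ)
    (hs : 1 ≤ s) (ht : 1 ≤ t)
    (hδ0 : ∀ i j, 0 ≤ δ i j)
    (hα1 : ∀ i, 1 ≤ α i) (hαα : ∀ i, α i ≤ α' i) (hα't : ∀ i, α' i ≤ t)
    (hβ1 : ∀ j, 1 ≤ β j) (hββ : ∀ j, β j ≤ β' j) (hβ's : ∀ j, β' j ≤ s)
    (hsum : ∑ j, β j ≤ ∑ i, α' i)
    (hγ' : ∀ i j, δ i j < γ') (hγ'' : γ' < γ'')
    (M : LeftV s t α α' β β' ≃ RightV s t α' β) (hM : IsPM M) :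
    max (∑ i, α i) (∑ j, β j) ≤ mainCount M ∧
      mainCount M ≤ min (∑ i, α' i) (∑ j, β' j) := by

  classical
  -- Vertices of `A_i` are always matched into `⋃ Bset`, by adjacency.
  have hA : ∀ x : Σ i : Fin s, Fin (α i), (M (.inl (.inl x))).isLeft := by
    intro x
    obtain ⟨i, a⟩ := x
    have h := hM (.inl (.inl ⟨i, a⟩))
    rcases he : M (.inl (.inl ⟨i, a⟩)) with p | y
    · rfl
    · rw [he] at h; exact h.elim
  -- Vertices of `W_j` are always matched into `⋃ Bset`, by adjacency.
  have hW : ∀ x : Σ j : Fin t, Fin (s - β' j), (M (.inr (.inr x))).isLeft := by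
    intro x
    obtain ⟨j, w⟩ := x
    have h := hM (.inr (.inr ⟨j, w⟩))
    rcases he : M (.inr (.inr ⟨j, w⟩)) with p | y
    · rfl
    · rw [he] at h; exact h.elim
  have hIM1 : ∀ (a : (Σ i : Fin s, Fin (α i)) ⊕ (Σ i : Fin s, Fin (α' i - α i)))
      (r : RightV s t α' β), IsMainEdge (α := α) (β := β) (β' := β') (Sum.inl a) r = r.isLeft := by
    intro a r; cases a <;> cases r <;> rfl
  have hIM2 : ∀ (b : (Σ j : Fin t, Fin (β' j - β j)) ⊕ (Σ j : Fin t, Fin (s - β' j)))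
      (r : RightV s t α' β), IsMainEdge (α := α) (α' := α') (Sum.inr b) r = false := by
    intro b r; cases b <;> cases r <;> rfl
  -- the four partial sums
  set nA : ℕ := ∑ x : Σ i : Fin s, Fin (α i),
      (if (M (.inl (.inl x))).isLeft then 1 else 0) with hnA
  set nA' : ℕ := ∑ x : Σ i : Fin s, Fin (α' i - α i),
      (if (M (.inl (.inr x))).isLeft then 1 else 0) with hnA'
  set nX : ℕ := ∑ x : Σ j : Fin t, Fin (β' j - β j),
      (if (M (.inr (.inl x))).isLeft then 1 else 0) with hnX
  set nW : ℕ := ∑ x : Σ j : Fin t, Fin (s - β' j),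
      (if (M (.inr (.inr x))).isLeft then 1 else 0) with hnW
  -- mainCount equals nA + nA'
  have e1 : mainCount M = nA + nA' := by
    rw [mainCount, Finset.card_filter]
    rw [Fintype.sum_sum_type, Fintype.sum_sum_type, Fintype.sum_sum_type]
    simp only [hIM1, hIM2, if_false, Bool.false_eq_true, Finset.sum_const_zero,
      add_zero]
    rfl
  -- total count of left vertices matched into `⋃ Bset` is `s * t`
  have e2 : nA + nA' + (nX + nW) = s * t := by
    have h1 : (univ.filter (fun v : LeftV s t α α' β β' => (M v).isLeft)).card
        = (univ.filter (fun r : RightV s t α' β => r.isLeft)).card :=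
      Finset.card_equiv M (fun v => by simp)
    have h2 : (univ.filter (fun r : RightV s t α' β => r.isLeft)).card = s * t := by
      rw [Finset.card_filter, Fintype.sum_sum_type]
      simp [Fintype.card_prod]
    have h3 : (univ.filter (fun v : LeftV s t α α' β β' => (M v).isLeft)).card
        = nA + nA' + (nX + nW) := by
      rw [Finset.card_filter]
      rw [Fintype.sum_sum_type, Fintype.sum_sum_type, Fintype.sum_sum_type]
    rw [← h3, h1, h2]
  -- evaluate nA and nW
  have eA : nA = ∑ i, α i := by
    rw [hnA]
    have : ∀ x : Σ i : Fin s, Fin (α i),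
        (if (M (.inl (.inl x))).isLeft then 1 else 0) = 1 := fun x => if_pos (hA x)
    rw [Finset.sum_congr rfl (fun x _ => this x)]
    simp
  have eW : nW = ∑ j, (s - β' j) := by
    rw [hnW]
    have : ∀ x : Σ j : Fin t, Fin (s - β' j),
        (if (M (.inr (.inr x))).isLeft then 1 else 0) = 1 := fun x => if_pos (hW x)
    rw [Finset.sum_congr rfl (fun x _ => this x)]
    simp
  -- bound nA' and nX
  have bA' : nA' ≤ ∑ i, (α' i - α i) := by
    rw [hnA']
    calc (∑ x : Σ i : Fin s, Fin (α' i - α i),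
        (if (M (.inl (.inr x))).isLeft then 1 else 0))
        ≤ ∑ x : Σ i : Fin s, Fin (α' i - α i), 1 :=
          Finset.sum_le_sum (fun x _ => by split <;> omega)
      _ = ∑ i, (α' i - α i) := by simp
  have bX : nX ≤ ∑ j, (β' j - β j) := by
    rw [hnX]
    calc (∑ x : Σ j : Fin t, Fin (β' j - β j),
        (if (M (.inr (.inl x))).isLeft then 1 else 0))
        ≤ ∑ x : Σ j : Fin t, Fin (β' j - β j), 1 :=
          Finset.sum_le_sum (fun x _ => by split <;> omega)
      _ = ∑ j, (β' j - β j) := by simp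
  -- arithmetic identities
  have idA : ∑ i, α i + ∑ i, (α' i - α i) = ∑ i, α' i := by
    rw [← Finset.sum_add_distrib]
    exact Finset.sum_congr rfl fun i _ => Nat.add_sub_cancel' (hαα i)
  have idB : ∑ j, β j + ∑ j, (β' j - β j) = ∑ j, β' j := by
    rw [← Finset.sum_add_distrib]
    exact Finset.sum_congr rfl fun j _ => Nat.add_sub_cancel' (hββ j)
  have idW : ∑ j, (s - β' j) + ∑ j, β' j = s * t := by
    rw [← Finset.sum_add_distrib]
    have : ∀ j : Fin t, j ∈ univ → s - β' j + β' j = s :=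
      fun j _ => Nat.sub_add_cancel (hβ's j)
    rw [Finset.sum_congr rfl this]
    simp [mul_comm]
  constructor
  · rw [e1]
    refine max_le ?_ ?_
    · omega
    · omega
  · rw [e1]
    refine le_min ?_ ?_ <;> omega
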